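/- Under the zero-measure intersection of moments assumption, the conditional Gaussian family G_B satisfies the strengthened linear-independence condition (b4): there exists a full-measure subset Y ⊂ R^{mM} such that for every positive-measure subset Y' ⊂ Y and every positive-measure subset Z ⊂ R^m, any finite subset of G_B is linearly independent as functions of (z_t, z_{t-1},…,z_{t-M}) restricted to Z × Y'. -/

import Mathlib

open MeasureTheory Matrix

/-- The multivariate Gaussian density on `ι → ℝ` with mean `μ` and covariance `S`. -/
noncomputable def gaussianPDF {ι : Type*} [Fintype ι] [DecidableEq ι]
    (μ : ι → ℝ) (S : Matrix ι ι ℝ) (z : ι → ℝ) : ℝ :=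
  Real.exp (-(1 / 2) * ((z - μ) ⬝ᵥ S⁻¹.mulVec (z - μ))) /
    Real.sqrt ((2 * Real.pi) ^ Fintype.card ι * S.det)

open Filter Topology


/-- A nonzero analytic function on `ℝ` has countable zero set. -/
lemma aux_countable_zeros {f : ℝ → ℝ} (hf : AnalyticOnNhd ℝ f Set.univ)
    (hne : ∃ x, f x ≠ 0) : Set.Countable {x : ℝ | f x = 0} := by
  have key : ∀ x : ℝ, ∀ᶠ z in 𝓝[≠] x, f z ≠ 0 := by
    intro x
    rcases (hf x (Set.mem_univ x)).eventually_eq_zero_or_eventually_ne_zero with h | h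
    · exfalso
      obtain ⟨y, hy⟩ := hne
      have hfreq : ∃ᶠ z in 𝓝[≠] x, f z = 0 :=
        ((h.filter_mono nhdsWithin_le_nhds).mono fun z hz => by simpa using hz).frequently
      exact hy (hf.eqOn_zero_of_preconnected_of_frequently_eq_zero isPreconnected_univ
        (Set.mem_univ x) hfreq (Set.mem_univ y))
    · exact h
  have hdisc : DiscreteTopology {x : ℝ | f x = 0} := by
    rw [discreteTopology_subtype_iff]
    intro x hx
    rw [inf_principal_eq_bot]
    filter_upwards [key x] with z hz
    simpa using hz
  exact (HereditarilyLindelof_LindelofSets _).countable hdisc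

/-- The zero set of a not-identically-zero analytic function on `ℝ^n` is Lebesgue-null. -/
lemma aux_null_zeros : ∀ (n : ℕ) (f : (Fin n → ℝ) → ℝ),
    AnalyticOnNhd ℝ f Set.univ → (∃ x, f x ≠ 0) → volume {x | f x = 0} = 0 := by
  intro n
  induction n with
  | zero =>
    rintro f _ ⟨x, hx⟩
    have hempty : {y : Fin 0 → ℝ | f y = 0} = ∅ := by
      ext y
      simp [Subsingleton.elim y x, hx]
    simp [hempty]
  | succ n ih =>
    rintro f hf ⟨x₀, hx₀⟩
    set e := MeasurableEquiv.piFinSuccAbove (fun _ : Fin (n + 1) => ℝ) 0 with he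
    set g : ℝ × (Fin n → ℝ) → ℝ := fun p => f (e.symm p) with hg
    have hesymm : ∀ p : ℝ × (Fin n → ℝ), e.symm p = Fin.insertNth 0 p.1 p.2 := fun _ => rfl
    have hfc : Continuous f := by
      rw [← continuousOn_univ]; exact hf.continuousOn
    have hgm : Measurable g := (hfc.measurable).comp e.symm.measurable
    have hs : MeasurableSet {p : ℝ × (Fin n → ℝ) | g p = 0} :=
      hgm (measurableSet_singleton 0)
    have hseteq : {x : Fin (n + 1) → ℝ | f x = 0} = e ⁻¹' {p | g p = 0} := by
      ext x
      simp [hg]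
    -- analyticity of the two kinds of slices
    have hins1 : ∀ (y : Fin n → ℝ),
        AnalyticOnNhd ℝ (fun t : ℝ => (Fin.insertNth 0 t y : Fin (n + 1) → ℝ)) Set.univ := by
      intro y t _
      rw [analyticAt_pi_iff]
      intro i
      rcases Fin.eq_zero_or_eq_succ i with rfl | ⟨j, rfl⟩
      · have h0 : (fun s : ℝ => Fin.insertNth (α := fun _ : Fin (n+1) => ℝ) 0 s y 0) = fun s => s := by
          funext s; simp
        rw [h0]; exact analyticAt_id
      · have h0 : (fun s : ℝ => Fin.insertNth (α := fun _ : Fin (n+1) => ℝ) 0 s y j.succ) = fun _ => y j := by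
          funext s
          simpa using Fin.insertNth_apply_succAbove (i := (0 : Fin (n + 1))) (j := j) s y
        rw [h0]; exact analyticAt_const
    have hins2 : ∀ (t : ℝ),
        AnalyticOnNhd ℝ (fun y : Fin n → ℝ => (Fin.insertNth 0 t y : Fin (n + 1) → ℝ))
          Set.univ := by
      intro t y _
      rw [analyticAt_pi_iff]
      intro i
      rcases Fin.eq_zero_or_eq_succ i with rfl | ⟨j, rfl⟩
      · have h0 : (fun z : Fin n → ℝ => Fin.insertNth (α := fun _ : Fin (n+1) => ℝ) 0 t z 0) = fun _ => t := by
          funext z; simp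
        rw [h0]; exact analyticAt_const
      · have h0 : (fun z : Fin n → ℝ => Fin.insertNth (α := fun _ : Fin (n+1) => ℝ) 0 t z j.succ) = fun z => z j := by
          funext z
          simpa using Fin.insertNth_apply_succAbove (i := (0 : Fin (n + 1))) (j := j) t z
        rw [h0]
        exact (ContinuousLinearMap.proj (R := ℝ) (φ := fun _ : Fin n => ℝ) j).analyticAt y
    -- the witness
    set t₀ : ℝ := (e x₀).1
    set y₀ : Fin n → ℝ := (e x₀).2
    have hw : g (t₀, y₀) ≠ 0 := by
      have : ((t₀, y₀) : ℝ × (Fin n → ℝ)) = e x₀ := rfl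
      rw [hg]; simp only [this, MeasurableEquiv.symm_apply_apply]; exact hx₀
    -- bad set of t's
    have hB : Set.Countable {t : ℝ | g (t, y₀) = 0} := by
      apply aux_countable_zeros (f := fun t => g (t, y₀))
      · intro t ht
        have h0 : (fun t : ℝ => g (t, y₀)) = fun t => f (Fin.insertNth 0 t y₀) := by
          funext s; exact congrArg f (hesymm (s, y₀))
        rw [h0]
        exact (hf _ (Set.mem_univ _)).comp (hins1 y₀ t (Set.mem_univ t))
      · exact ⟨t₀, hw⟩
    have hBnull : volume {t : ℝ | g (t, y₀) = 0} = 0 := hB.measure_zero volume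
    -- slices for good t
    have hslice : ∀ t : ℝ, g (t, y₀) ≠ 0 → volume {y : Fin n → ℝ | g (t, y) = 0} = 0 := by
      intro t ht
      have heq : (fun y : Fin n → ℝ => g (t, y)) = fun y => f (Fin.insertNth 0 t y) := by
        funext y; exact congrArg f (hesymm (t, y))
      apply ih (fun y => g (t, y))
      · rw [heq]
        intro y _
        exact (hf _ (Set.mem_univ _)).comp (hins2 t y (Set.mem_univ y))
      · exact ⟨y₀, ht⟩
    -- put it together
    have hprod : volume {p : ℝ × (Fin n → ℝ) | g p = 0} = 0 := by
      rw [MeasureTheory.Measure.volume_eq_prod]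
      rw [MeasureTheory.Measure.measure_prod_null hs]
      have : ∀ᵐ t : ℝ, volume (Prod.mk t ⁻¹' {p : ℝ × (Fin n → ℝ) | g p = 0}) = 0 := by
        have hcompl : ∀ᵐ t : ℝ, t ∉ {t : ℝ | g (t, y₀) = 0} :=
          measure_eq_zero_iff_ae_notMem.mp hBnull
        filter_upwards [hcompl] with t ht
        exact hslice t (by simpa using ht)
      exact this
    have mp := MeasureTheory.volume_preserving_piFinSuccAbove (fun _ : Fin (n + 1) => ℝ) 0
    rw [hseteq]
    rw [mp.measure_preimage hs.nullMeasurableSet]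
    exact hprod


/-- Functions `t ↦ exp (a t² + b t)` with pairwise distinct `(a, b)` are linearly
independent. -/
lemma aux_exp_indep {n : ℕ} {a b d : Fin n → ℝ}
    (hab : ∀ i j : Fin n, i ≠ j → (a i, b i) ≠ (a j, b j))
    (h : ∀ t : ℝ, ∑ i, d i * Real.exp (a i * t ^ 2 + b i * t) = 0) :
    ∀ i, d i = 0 := by
  by_contra hc
  push_neg at hc
  obtain ⟨i0, hi0⟩ := hc
  set S : Finset (Fin n) := Finset.univ.filter (fun i => d i ≠ 0) with hS
  have hi0S : i0 ∈ S := by simp [hS, hi0]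
  obtain ⟨k, hkS, hk⟩ := S.exists_max_image (fun i => toLex (a i, b i)) ⟨i0, hi0S⟩
  have hdk : d k ≠ 0 := by simpa [hS] using hkS
  have hterm : ∀ i : Fin n,
      Tendsto (fun t : ℝ => d i * Real.exp ((a i - a k) * t ^ 2 + (b i - b k) * t))
        atTop (𝓝 (if i = k then d k else 0)) := by
    intro i
    rcases eq_or_ne i k with rfl | hik
    · simpa using (tendsto_const_nhds :
        Tendsto (fun _ : ℝ => d i) atTop (𝓝 (d i)))
    · simp only [if_neg hik]
      rcases eq_or_ne (d i) 0 with hdi | hdi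
      · simpa [hdi] using (tendsto_const_nhds :
          Tendsto (fun _ : ℝ => (0 : ℝ)) atTop (𝓝 0))
      · have hiS : i ∈ S := by simp [hS, hdi]
        have hlt : toLex (a i, b i) < toLex (a k, b k) := by
          refine lt_of_le_of_ne (hk i hiS) ?_
          intro hEq
          exact hab i k hik (by simpa using hEq)
        have hq : Tendsto (fun t : ℝ => (a i - a k) * t ^ 2 + (b i - b k) * t)
            atTop atBot := by
          rcases (Prod.Lex.lt_iff).1 hlt with hlt1 | ⟨heq1, hlt2⟩
          · have hc0 : a i - a k < 0 := by simpa using sub_neg.mpr hlt1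
            have h1 : Tendsto (fun t : ℝ => (a i - a k) * t + (b i - b k)) atTop atBot := by
              apply tendsto_atBot_add_const_right
              exact Tendsto.const_mul_atTop_of_neg hc0 tendsto_id
            have h2 : Tendsto (fun t : ℝ => t * ((a i - a k) * t + (b i - b k)))
                atTop atBot := tendsto_id.atTop_mul_atBot₀ h1
            convert h2 using 2 with t
            ring
          · have he : a i - a k = 0 := by simpa using sub_eq_zero.mpr heq1
            have hb0 : b i - b k < 0 := by simpa using sub_neg.mpr hlt2
            have h1 : Tendsto (fun t : ℝ => (b i - b k) * t) atTop atBot :=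
              Tendsto.const_mul_atTop_of_neg hb0 tendsto_id
            convert h1 using 2 with t
            rw [he]; ring
        have := (Real.tendsto_exp_atBot.comp hq).const_mul (d i)
        simpa [mul_zero] using this
  have hsum := tendsto_finset_sum Finset.univ (fun i _ => hterm i)
  have hzero : ∀ t : ℝ,
      ∑ i, d i * Real.exp ((a i - a k) * t ^ 2 + (b i - b k) * t) = 0 := by
    intro t
    have key : ∑ i, d i * Real.exp ((a i - a k) * t ^ 2 + (b i - b k) * t)
        = (∑ i, d i * Real.exp (a i * t ^ 2 + b i * t))
            * Real.exp (-(a k * t ^ 2 + b k * t)) := by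
      rw [Finset.sum_mul]
      refine Finset.sum_congr rfl fun i _ => ?_
      rw [mul_assoc, ← Real.exp_add]
      ring_nf
    rw [key, h t, zero_mul]
  have h0 : Tendsto (fun t : ℝ =>
      ∑ i, d i * Real.exp ((a i - a k) * t ^ 2 + (b i - b k) * t)) atTop (𝓝 0) := by
    have : (fun t : ℝ =>
        ∑ i, d i * Real.exp ((a i - a k) * t ^ 2 + (b i - b k) * t)) = fun _ => (0 : ℝ) := by
      funext t; exact hzero t
    rw [this]; exact tendsto_const_nhds
  have huniq := tendsto_nhds_unique hsum h0
  rw [Finset.sum_ite_eq' Finset.univ k (fun _ => d k)] at huniq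
  simp at huniq
  exact hdk huniq

lemma aux_dot_symm {m : ℕ} {D : Matrix (Fin m) (Fin m) ℝ} (hsym : Dᵀ = D)
    (v w : Fin m → ℝ) : v ⬝ᵥ D.mulVec w = w ⬝ᵥ D.mulVec v := by
  rw [Matrix.dotProduct_mulVec]
  have h0 : v ᵥ* D = D *ᵥ v := by rw [← Matrix.vecMul_transpose, hsym]
  rw [h0, dotProduct_comm]

lemma aux_quad_analytic {m : ℕ} (A : Matrix (Fin m) (Fin m) ℝ) (μ x : Fin m → ℝ) :
    AnalyticAt ℝ (fun z : Fin m → ℝ => (z - μ) ⬝ᵥ A.mulVec (z - μ)) x := by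
  have h0 : (fun z : Fin m → ℝ => (z - μ) ⬝ᵥ A.mulVec (z - μ))
      = fun z => ∑ k, (z k - μ k) * ∑ l, A k l * (z l - μ l) := by
    funext z; simp [dotProduct, Matrix.mulVec]
  rw [h0]
  apply Finset.analyticAt_fun_sum
  intro k _
  apply AnalyticAt.mul
  · exact ((ContinuousLinearMap.proj (R := ℝ) (φ := fun _ : Fin m => ℝ) k).analyticAt x).sub
      analyticAt_const
  · apply Finset.analyticAt_fun_sum
    intro l _
    exact analyticAt_const.mul
      (((ContinuousLinearMap.proj (R := ℝ) (φ := fun _ : Fin m => ℝ) l).analyticAt x).sub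
        analyticAt_const)

lemma aux_dot_analytic {m : ℕ} (w x : Fin m → ℝ) :
    AnalyticAt ℝ (fun v : Fin m → ℝ => v ⬝ᵥ w) x := by
  have h0 : (fun v : Fin m → ℝ => v ⬝ᵥ w) = fun v => ∑ k, v k * w k := by
    funext v; simp [dotProduct]
  rw [h0]
  apply Finset.analyticAt_fun_sum
  intro k _
  exact ((ContinuousLinearMap.proj (R := ℝ) (φ := fun _ : Fin m => ℝ) k).analyticAt x).mul
    analyticAt_const

lemma aux_gauss_analytic {m : ℕ} (μ : Fin m → ℝ) (S : Matrix (Fin m) (Fin m) ℝ)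
    (x : Fin m → ℝ) : AnalyticAt ℝ (gaussianPDF μ S) x := by
  unfold gaussianPDF
  simp_rw [div_eq_mul_inv]
  exact ((analyticAt_const.mul (aux_quad_analytic S⁻¹ μ x)).rexp).mul analyticAt_const

lemma aux_dot_nonzero {m : ℕ} {w : Fin m → ℝ} (hw : w ≠ 0) :
    ∃ v : Fin m → ℝ, v ⬝ᵥ w ≠ 0 :=
  ⟨w, fun h => hw (dotProduct_self_eq_zero.mp h)⟩

lemma aux_quad_nonzero {m : ℕ} {D : Matrix (Fin m) (Fin m) ℝ} (hsym : Dᵀ = D) (hD : D ≠ 0) :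
    ∃ v : Fin m → ℝ, v ⬝ᵥ D.mulVec v ≠ 0 := by
  by_contra hcon
  push_neg at hcon
  apply hD
  have key2 : ∀ v w : Fin m → ℝ, v ⬝ᵥ D.mulVec w = 0 := by
    intro v w
    have h1 := hcon (v + w)
    have h2 := hcon v
    have h3 := hcon w
    have hsymvw := aux_dot_symm hsym v w
    simp only [add_dotProduct, Matrix.mulVec_add, dotProduct_add] at h1
    linarith
  ext i j
  have h4 := key2 (Pi.single i 1) (Pi.single j 1)
  simpa [Matrix.mulVec_single, single_dotProduct] using h4

lemma aux_gauss_line {m : ℕ} (μ : Fin m → ℝ) (S : Matrix (Fin m) (Fin m) ℝ)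
    (hsym : (S⁻¹)ᵀ = S⁻¹) (v : Fin m → ℝ) (t : ℝ) :
    gaussianPDF μ S (t • v)
      = Real.exp ((-(1 / 2) * (v ⬝ᵥ S⁻¹.mulVec v)) * t ^ 2
          + (v ⬝ᵥ S⁻¹.mulVec μ) * t)
        * (Real.exp (-(1 / 2) * (μ ⬝ᵥ S⁻¹.mulVec μ))
            / Real.sqrt ((2 * Real.pi) ^ m * S.det)) := by
  unfold gaussianPDF
  have hexp : -(1 / 2) * ((t • v - μ) ⬝ᵥ S⁻¹.mulVec (t • v - μ))
      = ((-(1 / 2) * (v ⬝ᵥ S⁻¹.mulVec v)) * t ^ 2 + (v ⬝ᵥ S⁻¹.mulVec μ) * t)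
        + (-(1 / 2) * (μ ⬝ᵥ S⁻¹.mulVec μ)) := by
    have hs1 := aux_dot_symm hsym μ v
    simp only [sub_dotProduct, dotProduct_sub, Matrix.mulVec_sub,
      Matrix.mulVec_smul, smul_dotProduct, dotProduct_smul, smul_eq_mul]
    linear_combination (t / 2) * hs1
  rw [hexp, Real.exp_add, Fintype.card_fin, mul_div_assoc]

lemma aux_gauss_indep {m n : ℕ} (μ : Fin n → Fin m → ℝ) (S : Fin n → Matrix (Fin m) (Fin m) ℝ)
    (hpd : ∀ i, (S i).PosDef) (hd : ∀ i j : Fin n, i ≠ j → ¬(μ i = μ j ∧ S i = S j))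
    (c : Fin n → ℝ) (h : ∀ z, ∑ i, c i * gaussianPDF (μ i) (S i) z = 0) :
    ∀ i, c i = 0 := by
  have hdet : ∀ i, IsUnit (S i).det := fun i => isUnit_iff_ne_zero.mpr (hpd i).det_pos.ne'
  have hAinv : ∀ i, ((S i)⁻¹).PosDef := fun i => (hpd i).inv
  have hAsym : ∀ i, ((S i)⁻¹)ᵀ = (S i)⁻¹ := by
    intro i
    have h2 : ((S i)⁻¹)ᴴ = (S i)⁻¹ := (hAinv i).isHermitian
    rw [← Matrix.conjTranspose_eq_transpose_of_trivial]
    exact h2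
  have hdetA : ∀ i, IsUnit ((S i)⁻¹).det := fun i => isUnit_iff_ne_zero.mpr (hAinv i).det_pos.ne'
  have hparam : ∀ i j : Fin n, i ≠ j →
      (S i)⁻¹ ≠ (S j)⁻¹ ∨ ((S i)⁻¹).mulVec (μ i) ≠ ((S j)⁻¹).mulVec (μ j) := by
    intro i j hij
    by_contra hcon
    push_neg at hcon
    obtain ⟨hA1, hA2⟩ := hcon
    have hSij : S i = S j := by
      have h0 : ((S i)⁻¹)⁻¹ = ((S j)⁻¹)⁻¹ := by rw [hA1]
      rwa [Matrix.nonsing_inv_nonsing_inv _ (hdet i),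
        Matrix.nonsing_inv_nonsing_inv _ (hdet j)] at h0
    have hμ : μ i = μ j := by
      have h0 : ((S i)⁻¹)⁻¹.mulVec (((S i)⁻¹).mulVec (μ i))
          = ((S i)⁻¹)⁻¹.mulVec (((S j)⁻¹).mulVec (μ j)) := by rw [hA2]
      rwa [← hA1, Matrix.mulVec_mulVec, Matrix.mulVec_mulVec,
        Matrix.nonsing_inv_mul _ (hdetA i), Matrix.one_mulVec, Matrix.one_mulVec] at h0
    exact hd i j hij ⟨hμ, hSij⟩
  -- choose a good direction v
  set bad : Set (Fin m → ℝ) := ⋃ i, ⋃ j, ⋃ (_ : i ≠ j),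
      {v | v ⬝ᵥ ((S i)⁻¹ - (S j)⁻¹).mulVec v = 0 ∧
        v ⬝ᵥ (((S i)⁻¹).mulVec (μ i) - ((S j)⁻¹).mulVec (μ j)) = 0} with hbad
  have hbadnull : volume bad = 0 := by
    refine measure_iUnion_null fun i => measure_iUnion_null fun j =>
      measure_iUnion_null fun hij => ?_
    rcases hparam i j hij with hne | hne
    · have hDne : (S i)⁻¹ - (S j)⁻¹ ≠ 0 := sub_ne_zero.mpr hne
      have hDsym : ((S i)⁻¹ - (S j)⁻¹)ᵀ = (S i)⁻¹ - (S j)⁻¹ := by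
        rw [Matrix.transpose_sub, hAsym i, hAsym j]
      have hana : AnalyticOnNhd ℝ (fun v : Fin m → ℝ => v ⬝ᵥ ((S i)⁻¹ - (S j)⁻¹).mulVec v)
          Set.univ := by
        intro v _
        have h0 : (fun v : Fin m → ℝ => v ⬝ᵥ ((S i)⁻¹ - (S j)⁻¹).mulVec v)
            = fun v => (v - 0) ⬝ᵥ ((S i)⁻¹ - (S j)⁻¹).mulVec (v - 0) := by
          funext w; rw [sub_zero]
        rw [h0]
        exact aux_quad_analytic _ 0 v
      have hnull := aux_null_zeros m _ hana (aux_quad_nonzero hDsym hDne)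
      exact measure_mono_null (fun v hv => hv.1) hnull
    · have hana : AnalyticOnNhd ℝ
          (fun v : Fin m → ℝ =>
            v ⬝ᵥ (((S i)⁻¹).mulVec (μ i) - ((S j)⁻¹).mulVec (μ j))) Set.univ :=
        fun v _ => aux_dot_analytic _ v
      have hnull := aux_null_zeros m _ hana (aux_dot_nonzero (sub_ne_zero.mpr hne))
      exact measure_mono_null (fun v hv => hv.2) hnull
  obtain ⟨v, hv⟩ : ∃ v : Fin m → ℝ, v ∉ bad := by
    by_contra hall
    push_neg at hall
    have h0 : volume (Set.univ : Set (Fin m → ℝ)) = 0 :=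
      measure_mono_null (fun x _ => hall x) hbadnull
    exact absurd h0 (IsOpen.measure_pos volume isOpen_univ ⟨0, trivial⟩).ne'
  -- reduce to 1D
  have hkpos : ∀ i, 0 < Real.exp (-(1 / 2) * (μ i ⬝ᵥ ((S i)⁻¹).mulVec (μ i)))
      / Real.sqrt ((2 * Real.pi) ^ m * (S i).det) := by
    intro i
    apply div_pos (Real.exp_pos _)
    exact Real.sqrt_pos.mpr (mul_pos (pow_pos (by positivity) m) (hpd i).det_pos)
  have habv : ∀ i j : Fin n, i ≠ j →
      ((-(1 / 2) * (v ⬝ᵥ ((S i)⁻¹).mulVec v)), (v ⬝ᵥ ((S i)⁻¹).mulVec (μ i)))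
        ≠ ((-(1 / 2) * (v ⬝ᵥ ((S j)⁻¹).mulVec v)), (v ⬝ᵥ ((S j)⁻¹).mulVec (μ j))) := by
    intro i j hij hEq
    have h1 : -(1 / 2) * (v ⬝ᵥ ((S i)⁻¹).mulVec v)
        = -(1 / 2) * (v ⬝ᵥ ((S j)⁻¹).mulVec v) := congrArg Prod.fst hEq
    have h2 : v ⬝ᵥ ((S i)⁻¹).mulVec (μ i) = v ⬝ᵥ ((S j)⁻¹).mulVec (μ j) :=
      congrArg Prod.snd hEq
    have h1' : v ⬝ᵥ ((S i)⁻¹).mulVec v = v ⬝ᵥ ((S j)⁻¹).mulVec v :=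
      mul_left_cancel₀ (by norm_num : (-(1 / 2) : ℝ) ≠ 0) h1
    apply hv
    rw [hbad]
    refine Set.mem_iUnion.mpr ⟨i, Set.mem_iUnion.mpr ⟨j, Set.mem_iUnion.mpr ⟨hij, ?_, ?_⟩⟩⟩
    · rw [Matrix.sub_mulVec, dotProduct_sub, h1', sub_self]
    · rw [dotProduct_sub, h2, sub_self]
  have hline : ∀ t : ℝ, ∑ i, (c i * (Real.exp (-(1 / 2) * (μ i ⬝ᵥ ((S i)⁻¹).mulVec (μ i)))
        / Real.sqrt ((2 * Real.pi) ^ m * (S i).det)))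
      * Real.exp ((-(1 / 2) * (v ⬝ᵥ ((S i)⁻¹).mulVec v)) * t ^ 2
          + (v ⬝ᵥ ((S i)⁻¹).mulVec (μ i)) * t) = 0 := by
    intro t
    refine Eq.trans (Finset.sum_congr rfl fun i _ => ?_) (h (t • v))
    rw [aux_gauss_line (μ i) (S i) (hAsym i) v t]
    ring
  have hall := aux_exp_indep habv hline
  intro i
  have h0 := hall i
  rcases mul_eq_zero.mp h0 with h1 | h1
  · exact h1
  · exact absurd h1 (hkpos i).ne'


/-- Linear independence (under finite mixtures) of a family of functions
restricted to a subset `S` of their domain. -/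
def LinIndepOn {A E : Type*} (S : Set E) (F : A → E → ℝ) : Prop :=
  ∀ (n : ℕ) (a : Fin n → A), Function.Injective a →
    LinearIndependent ℝ (fun i : Fin n => S.restrict (F (a i)))

/-- under the zero-measure intersection of moments assumption,
the conditional Gaussian family satisfies the strengthened condition (b4): there
is a full-measure set `Y` of conditioning values such that the family restricted
to `Z ×ˢ Y'` is linearly independent for all positive-measure `Z` and `Y' ⊆ Y`. -/
theorem stmt6 {B : Type*} {m M : ℕ}
    (mfun : B → (Fin M → Fin m → ℝ) → Fin m → ℝ)
    (cov : B → (Fin M → Fin m → ℝ) → Matrix (Fin m) (Fin m) ℝ)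
    (hpd : ∀ b h, (cov b h).PosDef)
    (hzero : ∀ b b', b ≠ b' →
      volume {h : Fin M → Fin m → ℝ | mfun b h = mfun b' h ∧ cov b h = cov b' h} = 0) :
    ∃ Y : Set (Fin M → Fin m → ℝ), volume Yᶜ = 0 ∧
      ∀ Y' ⊆ Y, 0 < volume Y' → ∀ Z : Set (Fin m → ℝ), 0 < volume Z →
        LinIndepOn (Z ×ˢ Y') (fun b (p : (Fin m → ℝ) × (Fin M → Fin m → ℝ)) =>
          gaussianPDF (mfun b p.2) (cov b p.2) p.1) := by
  refine ⟨Set.univ, by simp, ?_⟩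
  intro Y' _ hY' Z hZ n a ha
  rw [Fintype.linearIndependent_iff]
  intro g hg
  set bad : Set (Fin M → Fin m → ℝ) := ⋃ i, ⋃ j, ⋃ (_ : i ≠ j),
      {h | mfun (a i) h = mfun (a j) h ∧ cov (a i) h = cov (a j) h} with hbad
  have hbadnull : volume bad = 0 :=
    measure_iUnion_null fun i => measure_iUnion_null fun j => measure_iUnion_null fun hij =>
      hzero (a i) (a j) fun hEq => hij (ha hEq)
  have hY'good : volume (Y' \ bad) ≠ 0 := by
    rw [measure_diff_null hbadnull]; exact hY'.ne'
  obtain ⟨h₀, hh₀Y', hh₀bad⟩ := nonempty_of_measure_ne_zero hY'good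
  have hZ0 : ∀ z ∈ Z, ∑ i, g i * gaussianPDF (mfun (a i) h₀) (cov (a i) h₀) z = 0 := by
    intro z hz
    have hmem : ((z, h₀) : (Fin m → ℝ) × (Fin M → Fin m → ℝ)) ∈ Z ×ˢ Y' := ⟨hz, hh₀Y'⟩
    have h1 := congrFun hg ⟨(z, h₀), hmem⟩
    simpa [Set.restrict_apply, Set.restrict, Finset.sum_apply] using h1
  have hG : ∀ z, ∑ i, g i * gaussianPDF (mfun (a i) h₀) (cov (a i) h₀) z = 0 := by
    by_contra hc
    push_neg at hc
    have hana : AnalyticOnNhd ℝ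
        (fun z => ∑ i, g i * gaussianPDF (mfun (a i) h₀) (cov (a i) h₀) z) Set.univ :=
      fun x _ => Finset.analyticAt_fun_sum _ fun i _ =>
        analyticAt_const.mul (aux_gauss_analytic _ _ x)
    have hnull := aux_null_zeros m _ hana hc
    have h0 : volume Z = 0 := measure_mono_null (fun z hz => hZ0 z hz) hnull
    exact absurd h0 hZ.ne'
  refine aux_gauss_indep (fun i => mfun (a i) h₀) (fun i => cov (a i) h₀)
    (fun i => hpd (a i) h₀) ?_ g hG
  rintro i j hij ⟨h1, h2⟩
  exact hh₀bad (Set.mem_iUnion.mpr ⟨i, Set.mem_iUnion.mpr ⟨j,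
    Set.mem_iUnion.mpr ⟨hij, h1, h2⟩⟩⟩)
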